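/- Let p ≠ 2 be a prime. The limiting density of residues attained by the squares modulo powers of p equals p/(2(p+1)); that is, the sequence λ ↦ |{n² mod p^λ : n ≥ 0}| / p^λ converges, as λ → ∞, to p/(2(p+1)). -/

import Mathlib

open Set Filter

/-- The set of squares hit by natural numbers in `ZMod (p^l)`. -/
private def sqSet (p l : ℕ) : Set (ZMod (p ^ l)) :=
  Set.range fun n : ℕ => ((n ^ 2 : ℕ) : ZMod (p ^ l))

private lemma mem_sqSet_iff {p l : ℕ} {x : ZMod (p ^ l)} :
    x ∈ sqSet p l ↔ ∃ n : ℕ, ((n : ZMod (p ^ l))) ^ 2 = x := by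
  unfold sqSet
  constructor
  · rintro ⟨n, rfl⟩; exact ⟨n, by push_cast; ring⟩
  · rintro ⟨n, rfl⟩; exact ⟨n, by push_cast; ring⟩

private lemma sq_eq_one_cases {p : ℕ} (hp : p.Prime) (hp2 : p ≠ 2) {l : ℕ}
    {x : ZMod (p ^ l)} (hx : x ^ 2 = 1) : x = 1 ∨ x = -1 := by
  haveI : NeZero (p ^ l) := ⟨pow_ne_zero _ hp.ne_zero⟩
  have hpI : Prime (p : ℤ) := Nat.prime_iff_prime_int.mp hp
  have hxv : ((x.val : ℕ) : ZMod (p ^ l)) = x := ZMod.natCast_rightInverse x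
  have h1 : ((((x.val:ℤ) - 1) * ((x.val:ℤ) + 1) : ℤ) : ZMod (p ^ l)) = 0 := by
    push_cast
    rw [hxv]
    have : (x - 1) * (x + 1) = x ^ 2 - 1 := by ring
    rw [this, hx, sub_self]
  have h2 : ((p : ℤ)) ^ l ∣ ((x.val:ℤ) - 1) * ((x.val:ℤ) + 1) := by
    have := (ZMod.intCast_zmod_eq_zero_iff_dvd _ _).mp h1
    rwa [Nat.cast_pow] at this
  by_cases hdvd : (p : ℤ) ∣ (x.val:ℤ) + 1
  · -- then p does not divide v - 1 (else p ∣ 2)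
    have hnd : ¬ (p : ℤ) ∣ (x.val:ℤ) - 1 := by
      intro h
      have h2' : (p : ℤ) ∣ 2 := by
        have : ((x.val:ℤ) + 1) - ((x.val:ℤ) - 1) = 2 := by ring
        exact this ▸ dvd_sub hdvd h
      have : p ∣ 2 := by exact_mod_cast h2'
      exact hp2 ((Nat.prime_dvd_prime_iff_eq hp Nat.prime_two).mp this)
    have h3 : ((p : ℤ)) ^ l ∣ (x.val:ℤ) + 1 := hpI.pow_dvd_of_dvd_mul_left l hnd h2
    right
    have : (((x.val:ℤ) + 1 : ℤ) : ZMod (p ^ l)) = 0 := by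
      rw [ZMod.intCast_zmod_eq_zero_iff_dvd]
      rwa [Nat.cast_pow]
    have hx1 : x + 1 = 0 := by
      push_cast at this
      rwa [hxv] at this
    linear_combination hx1
  · have h3 : ((p : ℤ)) ^ l ∣ (x.val:ℤ) - 1 := hpI.pow_dvd_of_dvd_mul_right l hdvd h2
    left
    have : (((x.val:ℤ) - 1 : ℤ) : ZMod (p ^ l)) = 0 := by
      rw [ZMod.intCast_zmod_eq_zero_iff_dvd]
      rwa [Nat.cast_pow]
    have hx1 : x - 1 = 0 := by
      push_cast at this
      rwa [hxv] at this
    linear_combination hx1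

private lemma two_lt_pow {p : ℕ} (hp : p.Prime) (hp2 : p ≠ 2) {l : ℕ} (hl : 1 ≤ l) :
    2 < p ^ l := by
  have h3 : 3 ≤ p := by
    rcases hp.two_le.lt_or_eq with h | h
    · omega
    · omega
  calc 2 < 3 := by norm_num
    _ ≤ p := h3
    _ = p ^ 1 := (pow_one p).symm
    _ ≤ p ^ l := Nat.pow_le_pow_right hp.pos hl

private lemma two_mul_card_sq_units {p : ℕ} (hp : p.Prime) (hp2 : p ≠ 2) {l : ℕ}
    (hl : 1 ≤ l) :
    2 * (Set.range fun u : (ZMod (p ^ l))ˣ => u ^ 2).ncard = p ^ (l - 1) * (p - 1) := by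
  haveI : NeZero (p ^ l) := ⟨pow_ne_zero _ hp.ne_zero⟩
  haveI : Fact (2 < p ^ l) := ⟨two_lt_pow hp hp2 hl⟩
  have hker : (((powMonoidHom 2 : (ZMod (p ^ l))ˣ →* (ZMod (p ^ l))ˣ)).ker :
      Set (ZMod (p ^ l))ˣ) = {1, -1} := by
    ext u
    simp only [SetLike.mem_coe, MonoidHom.mem_ker, powMonoidHom_apply, Set.mem_insert_iff,
      Set.mem_singleton_iff]
    constructor
    · intro h
      have hval : ((u : ZMod (p ^ l))) ^ 2 = 1 := by
        rw [← Units.val_pow_eq_pow_val, h, Units.val_one]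
      rcases sq_eq_one_cases hp hp2 hval with h1 | h1
      · left; exact Units.ext (by simpa using h1)
      · right; exact Units.ext (by simpa using h1)
    · rintro (rfl | rfl)
      · simp
      · simp [pow_two]
  have hone_ne : (1 : (ZMod (p ^ l))ˣ) ≠ -1 := by
    intro h
    exact ZMod.neg_one_ne_one (by simpa using congrArg Units.val h.symm)
  have hcard_ker :
      Nat.card (powMonoidHom 2 : (ZMod (p ^ l))ˣ →* (ZMod (p ^ l))ˣ).ker = 2 := by
    rw [← SetLike.coe_sort_coe, hker, Nat.card_coe_set_eq,
      Set.ncard_pair hone_ne]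
  have hrange : (Set.range fun u : (ZMod (p ^ l))ˣ => u ^ 2) =
      ((powMonoidHom 2 : (ZMod (p ^ l))ˣ →* (ZMod (p ^ l))ˣ).range :
        Set (ZMod (p ^ l))ˣ) := by
    ext u
    simp [MonoidHom.mem_range, powMonoidHom_apply, eq_comm]
  have hcardG : Nat.card (ZMod (p ^ l))ˣ = p ^ (l - 1) * (p - 1) := by
    rw [Nat.card_eq_fintype_card, ZMod.card_units_eq_totient,
      Nat.totient_prime_pow hp hl]
  have hmul :
      Nat.card (powMonoidHom 2 : (ZMod (p ^ l))ˣ →* (ZMod (p ^ l))ˣ).range *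
        Nat.card (powMonoidHom 2 : (ZMod (p ^ l))ˣ →* (ZMod (p ^ l))ˣ).ker =
        Nat.card (ZMod (p ^ l))ˣ := by
    rw [← Nat.card_congr (QuotientGroup.quotientKerEquivRange
      (powMonoidHom 2 : (ZMod (p ^ l))ˣ →* (ZMod (p ^ l))ˣ)).toEquiv]
    exact (Subgroup.card_eq_card_quotient_mul_card_subgroup _).symm
  rw [hrange, ← Nat.card_coe_set_eq, SetLike.coe_sort_coe, ← hcardG, ← hmul,
    hcard_ker]
  ring

private lemma unit_sq_part {p : ℕ} (hp : p.Prime) (hp2 : p ≠ 2) {l : ℕ} (hl : 1 ≤ l) :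
    2 * {x ∈ sqSet p l | IsUnit x}.ncard = p ^ (l - 1) * (p - 1) := by
  haveI : NeZero (p ^ l) := ⟨pow_ne_zero _ hp.ne_zero⟩
  have hset : {x ∈ sqSet p l | IsUnit x} =
      Units.val '' (Set.range fun u : (ZMod (p ^ l))ˣ => u ^ 2) := by
    ext x
    constructor
    · rintro ⟨hx, hux⟩
      obtain ⟨n, rfl⟩ := mem_sqSet_iff.mp hx
      have hn : IsUnit ((n : ZMod (p ^ l))) := by
        have := hux
        rwa [isUnit_pow_iff (by norm_num : (2:ℕ) ≠ 0)] at this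
      exact ⟨hn.unit ^ 2, ⟨hn.unit, rfl⟩, by simp [hn.unit_spec]⟩
    · rintro ⟨w, ⟨u, rfl⟩, rfl⟩
      refine ⟨?_, (u ^ 2).isUnit⟩
      obtain ⟨n, hn⟩ := ZMod.natCast_rightInverse.surjective (u : ZMod (p ^ l))
      exact mem_sqSet_iff.mpr ⟨n, by rw [hn]; simp⟩
  rw [hset, Set.ncard_image_of_injective _ Units.val_injective]
  exact two_mul_card_sq_units hp hp2 hl

private lemma nonunit_sq_part {p : ℕ} (hp : p.Prime) (l : ℕ) :
    {x ∈ sqSet p (l + 2) | ¬ IsUnit x}.ncard = (sqSet p l).ncard := by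
  haveI : NeZero (p ^ l) := ⟨pow_ne_zero _ hp.ne_zero⟩
  haveI : NeZero (p ^ (l + 2)) := ⟨pow_ne_zero _ hp.ne_zero⟩
  have hmod : p ^ (l + 2) = p ^ 2 * p ^ l := by ring
  set g : ZMod (p ^ l) → ZMod (p ^ (l + 2)) :=
    fun y => ((p ^ 2 * y.val : ℕ) : ZMod (p ^ (l + 2))) with hg
  have hginj : Function.Injective g := by
    intro y₁ y₂ h
    have h1 : (p ^ 2 * y₁.val) ≡ (p ^ 2 * y₂.val) [MOD p ^ (l + 2)] :=
      (ZMod.natCast_eq_natCast_iff _ _ _).mp h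
    rw [hmod] at h1
    have h2 : y₁.val ≡ y₂.val [MOD p ^ l] :=
      Nat.ModEq.mul_left_cancel' (pow_ne_zero 2 hp.ne_zero) h1
    have h3 : ((y₁.val : ℕ) : ZMod (p ^ l)) = ((y₂.val : ℕ) : ZMod (p ^ l)) :=
      (ZMod.natCast_eq_natCast_iff _ _ _).mpr h2
    rwa [ZMod.natCast_rightInverse y₁, ZMod.natCast_rightInverse y₂] at h3
  have key : ∀ (m : ℕ) (y : ZMod (p ^ l)), ((m : ZMod (p ^ l)) = y) →
      g y = ((p ^ 2 * m : ℕ) : ZMod (p ^ (l + 2))) := by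
    intro m y hm
    have h1 : y.val ≡ m [MOD p ^ l] := by
      apply (ZMod.natCast_eq_natCast_iff _ _ _).mp
      rw [ZMod.natCast_rightInverse y, hm]
    have h2 : (p ^ 2 * y.val) ≡ (p ^ 2 * m) [MOD p ^ (l + 2)] := by
      rw [hmod]; exact h1.mul_left' _
    exact (ZMod.natCast_eq_natCast_iff _ _ _).mpr h2
  have himg : g '' sqSet p l = {x ∈ sqSet p (l + 2) | ¬ IsUnit x} := by
    ext x
    constructor
    · rintro ⟨y, hy, rfl⟩
      obtain ⟨m, hm⟩ := mem_sqSet_iff.mp hy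
      have hm' : ((m ^ 2 : ℕ) : ZMod (p ^ l)) = y := by push_cast; rw [← hm]
      rw [key (m ^ 2) y hm']
      constructor
      · refine mem_sqSet_iff.mpr ⟨p * m, ?_⟩
        push_cast
        try ring
      · rw [ZMod.isUnit_iff_coprime]
        intro hc
        have hdvd1 : p ∣ p ^ 2 * m ^ 2 := dvd_mul_of_dvd_left (dvd_pow_self p two_ne_zero) _
        have hdvd2 : p ∣ p ^ (l + 2) := dvd_pow_self p (by omega)
        have := Nat.dvd_gcd hdvd1 hdvd2
        rw [Nat.Coprime] at hc
        rw [hc] at this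
        exact hp.one_lt.ne' (Nat.dvd_one.mp this)
    · rintro ⟨hx, hux⟩
      obtain ⟨n, rfl⟩ := mem_sqSet_iff.mp hx
      have hpn : p ∣ n := by
        by_contra hpn
        apply hux
        rw [show ((n : ZMod (p ^ (l + 2)))) ^ 2 = ((n ^ 2 : ℕ) : ZMod (p ^ (l + 2))) by
          push_cast; ring]
        rw [ZMod.isUnit_iff_coprime]
        exact Nat.Coprime.pow _ _ ((hp.coprime_iff_not_dvd.mpr hpn).symm)
      obtain ⟨m, rfl⟩ := hpn
      refine ⟨((m ^ 2 : ℕ) : ZMod (p ^ l)), mem_sqSet_iff.mpr ⟨m, by push_cast; ring⟩, ?_⟩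
      rw [key (m ^ 2) _ rfl]
      push_cast
      try ring
  rw [← himg, Set.ncard_image_of_injective _ hginj]

private lemma sqSet_split (p l : ℕ) [NeZero (p ^ l)] :
    (sqSet p l).ncard =
      {x ∈ sqSet p l | IsUnit x}.ncard + {x ∈ sqSet p l | ¬ IsUnit x}.ncard := by
  rw [← Set.ncard_union_eq]
  · congr 1
    ext x
    by_cases h : IsUnit x <;> simp [h]
  · rw [Set.disjoint_left]
    rintro x ⟨_, hx⟩ ⟨_, hx'⟩
    exact hx' hx

private lemma sqSet_zero_ncard (p : ℕ) : (sqSet p 0).ncard = 1 := by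
  haveI : Subsingleton (ZMod (p ^ 0)) := by rw [pow_zero]; infer_instance
  rw [Set.ncard_eq_one]
  refine ⟨0, ?_⟩
  apply Set.eq_singleton_iff_nonempty_unique_mem.mpr
  constructor
  · exact ⟨((0 ^ 2 : ℕ) : ZMod (p ^ 0)), ⟨0, rfl⟩⟩
  · intro x _
    exact Subsingleton.elim x 0

private lemma nonunit_base {p : ℕ} (hp : p.Prime) :
    {x ∈ sqSet p 1 | ¬ IsUnit x} = {(0 : ZMod (p ^ 1))} := by
  haveI : NeZero (p ^ 1) := ⟨pow_ne_zero _ hp.ne_zero⟩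
  have hiff : ∀ x : ZMod (p ^ 1), IsUnit x ↔ x ≠ 0 := by
    intro x
    have hxv : ((x.val : ℕ) : ZMod (p ^ 1)) = x := ZMod.natCast_rightInverse x
    constructor
    · intro h hx0
      rw [hx0] at h
      have h1 : ((0 : ℕ) : ZMod (p ^ 1)) = 0 := by simp
      rw [← h1, ZMod.isUnit_iff_coprime, Nat.coprime_zero_left, pow_one] at h
      exact hp.one_lt.ne' h
    · intro hx0
      rw [← hxv, ZMod.isUnit_iff_coprime]
      have hvlt : x.val < p ^ 1 := ZMod.val_lt x
      have hv0 : x.val ≠ 0 := by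
        intro h
        exact hx0 (by rw [← hxv, h, Nat.cast_zero])
      have hnd : ¬ p ∣ x.val := by
        intro hd
        have := Nat.le_of_dvd (Nat.pos_of_ne_zero hv0) hd
        have hpe : p ^ 1 = p := pow_one p
        omega
      exact Nat.Coprime.pow_right 1 ((hp.coprime_iff_not_dvd.mpr hnd).symm)
  ext x
  simp only [Set.mem_setOf_eq, Set.mem_singleton_iff]
  constructor
  · rintro ⟨hx, hux⟩
    by_contra hx0
    exact hux ((hiff x).mpr hx0)
  · rintro rfl
    refine ⟨mem_sqSet_iff.mpr ⟨0, by simp⟩, ?_⟩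
    intro h
    exact (hiff 0).mp h rfl

private lemma master {p : ℕ} (hp : p.Prime) (hp2 : p ≠ 2) (l : ℕ) :
    2 * ((p + 1) * (sqSet p l).ncard) =
      p ^ (l + 1) + (if Even l then p + 2 else 2 * p + 1) := by
  induction l using Nat.twoStepInduction with
  | zero =>
    rw [sqSet_zero_ncard]
    simp [pow_one]
    ring
  | one =>
    haveI : NeZero (p ^ 1) := ⟨pow_ne_zero _ hp.ne_zero⟩
    have hsplit := sqSet_split p 1
    have hu := unit_sq_part hp hp2 (le_refl 1)
    have hnu : {x ∈ sqSet p 1 | ¬ IsUnit x}.ncard = 1 := by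
      rw [nonunit_base hp, Set.ncard_singleton]
    rw [hsplit, hnu]
    rw [if_neg (by decide : ¬ Even 1)]
    obtain ⟨k, rfl⟩ : ∃ k, p = 1 + k := ⟨p - 1, by have := hp.two_le; omega⟩
    simp only [Nat.add_sub_cancel_left, pow_zero, one_mul] at hu
    zify at hu ⊢
    linear_combination ((k : ℤ) + 2) * hu
  | more l ih _ =>
    haveI : NeZero (p ^ (l + 2)) := ⟨pow_ne_zero _ hp.ne_zero⟩
    have hsplit := sqSet_split p (l + 2)
    have hu := unit_sq_part hp hp2 (show 1 ≤ l + 2 by omega)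
    have hnu := nonunit_sq_part hp l
    rw [hsplit, hnu]
    have heven : (if Even (l + 2) then p + 2 else 2 * p + 1)
        = (if Even l then p + 2 else 2 * p + 1) := by
      simp [Nat.even_add]
    rw [heven]
    simp only [show l + 2 - 1 = l + 1 by omega] at hu
    obtain ⟨k, rfl⟩ : ∃ k, p = 1 + k := ⟨p - 1, by have := hp.two_le; omega⟩
    simp only [Nat.add_sub_cancel_left] at hu
    have hp3 : (1 + k) ^ (l + 2 + 1) = (1 + k) ^ (l + 1) * (1 + k) ^ 2 := by ring
    rw [hp3]
    zify at hu ih ⊢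
    linear_combination ((k : ℤ) + 2) * hu + ih

theorem limiting_density_squares_mod_prime_powers (p : ℕ) (hp : p.Prime) (hp2 : p ≠ 2) :
    Filter.Tendsto
      (fun lam : ℕ =>
        (Nat.card (Set.range fun n : ℕ => ((n ^ 2 : ℕ) : ZMod (p ^ lam))) : ℝ) / (p : ℝ) ^ lam)
      Filter.atTop (nhds ((p : ℝ) / (2 * ((p : ℝ) + 1)))) := by
  have hp0 : (0 : ℝ) < p := by exact_mod_cast hp.pos
  have hp1 : (0 : ℝ) < (p : ℝ) + 1 := by linarith
  set c : ℕ → ℕ := fun l => if Even l then p + 2 else 2 * p + 1 with hc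
  have hmain : ∀ lam : ℕ,
      (Nat.card (Set.range fun n : ℕ => ((n ^ 2 : ℕ) : ZMod (p ^ lam))) : ℝ) / (p : ℝ) ^ lam
        = (p : ℝ) / (2 * ((p : ℝ) + 1)) + (c lam : ℝ) / (2 * ((p : ℝ) + 1)) * (1 / p) ^ lam := by
    intro lam
    have hm := master hp hp2 lam
    have hcard : Nat.card (Set.range fun n : ℕ => ((n ^ 2 : ℕ) : ZMod (p ^ lam)))
        = (sqSet p lam).ncard := Nat.card_coe_set_eq _
    have hmR : 2 * (((p : ℝ) + 1) * ((sqSet p lam).ncard : ℝ))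
        = (p : ℝ) ^ (lam + 1) + (c lam : ℝ) := by
      exact_mod_cast congrArg (fun n : ℕ => (n : ℝ)) hm
    have h2p : (2 * ((p : ℝ) + 1)) ≠ 0 := by positivity
    have hplam : (p : ℝ) ^ lam ≠ 0 := by positivity
    have hS : ((sqSet p lam).ncard : ℝ)
        = ((p : ℝ) ^ (lam + 1) + (c lam : ℝ)) / (2 * ((p : ℝ) + 1)) := by
      rw [eq_div_iff h2p]
      linarith [hmR]
    rw [hcard, hS, pow_succ]
    have hpne : (p : ℝ) ≠ 0 := ne_of_gt hp0
    field_simp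
    rw [one_div, inv_pow, mul_add, mul_left_comm _ (c lam : ℝ), mul_inv_cancel₀ hplam, mul_one]
  have herr : Tendsto (fun lam : ℕ => (c lam : ℝ) / (2 * ((p : ℝ) + 1)) * (1 / p) ^ lam)
      atTop (nhds 0) := by
    apply squeeze_zero (fun lam => by positivity)
      (g := fun lam => ((2 * p + 1 : ℕ) : ℝ) / (2 * ((p : ℝ) + 1)) * (1 / p) ^ lam)
    · intro lam
      have h2le := hp.two_le
      have hcle : c lam ≤ 2 * p + 1 := by
        simp only [hc]
        split <;> omega
      apply mul_le_mul_of_nonneg_right _ (by positivity)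
      apply div_le_div_of_nonneg_right _ (by positivity)
      exact Nat.cast_le.mpr hcle
    · have h01 : (0 : ℝ) ≤ 1 / p := by positivity
      have h11 : (1 : ℝ) / p < 1 := by
        rw [div_lt_one hp0]
        exact_mod_cast hp.one_lt
      have := (tendsto_pow_atTop_nhds_zero_of_lt_one h01 h11).const_mul
        (((2 * p + 1 : ℕ) : ℝ) / (2 * ((p : ℝ) + 1)))
      simpa using this
  have hadd : Tendsto (fun lam : ℕ => (p : ℝ) / (2 * ((p : ℝ) + 1))
      + (c lam : ℝ) / (2 * ((p : ℝ) + 1)) * (1 / p) ^ lam) atTop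
      (nhds ((p : ℝ) / (2 * ((p : ℝ) + 1)) + 0)) := Tendsto.add tendsto_const_nhds herr
  rw [add_zero] at hadd
  have hfun : (fun lam : ℕ =>
      (Nat.card (Set.range fun n : ℕ => ((n ^ 2 : ℕ) : ZMod (p ^ lam))) : ℝ) / (p : ℝ) ^ lam)
      = fun lam : ℕ => (p : ℝ) / (2 * ((p : ℝ) + 1))
          + (c lam : ℝ) / (2 * ((p : ℝ) + 1)) * (1 / p) ^ lam := funext hmain
  rw [hfun]
  exact hadd
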